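/- arXiv:2604.18147 — 6 statements merged into one kernel-verified Lean document; each statement's English description precedes it below -/
import Mathlib

section
/- Let D, E ⊆ [0,∞)^m be finite unions of anchored boxes with D strictly contained in E (D ⊊ E). Then Mag(D) < Mag(E), where Mag(D) = ∑_{S⊆[m]} 2^{-|S|} λ_{|S|}(π_S D). -/
open Set MeasureTheory

/-- Coordinate projection onto the coordinates in `S`. -/
def proj {m : ℕ} (S : Finset (Fin m)) (x : Fin m → ℝ) : S → ℝ := fun i => x i.1

/-- The anchored box `∏ᵢ [0, aᵢ]`. -/
def anchoredBox {m : ℕ} (a : Fin m → ℝ) : Set (Fin m → ℝ) :=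
  Set.pi Set.univ fun i => Set.Icc 0 (a i)

/-- `D` is a finite union of anchored boxes in `[0,∞)^m`. -/
def FiniteUnionOfAnchoredBoxes {m : ℕ} (D : Set (Fin m → ℝ)) : Prop :=
  ∃ F : Finset (Fin m → ℝ), (∀ a ∈ F, ∀ i, 0 ≤ a i) ∧ D = ⋃ a ∈ F, anchoredBox a

/-- The magnitude of a dominated set, via the all-dimensional projection formula. -/
noncomputable def Mag {m : ℕ} (D : Set (Fin m → ℝ)) : ℝ :=
  ∑ S : Finset (Fin m), (2 : ℝ) ^ (-(S.card : ℤ)) * (volume (proj S '' D)).toReal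

lemma proj_image_box {m : ℕ} (S : Finset (Fin m)) (a : Fin m → ℝ) (ha : ∀ i, 0 ≤ a i) :
    proj S '' anchoredBox a = Set.pi Set.univ fun i : S => Set.Icc (0:ℝ) (a i.1) := by
  ext q
  constructor
  · rintro ⟨y, hy, rfl⟩ i _
    exact hy i.1 (mem_univ _)
  · intro hq
    refine ⟨fun i => if h : i ∈ S then q ⟨i, h⟩ else 0, fun i _ => ?_, ?_⟩
    · by_cases h : i ∈ S
      · simpa [h] using hq ⟨i, h⟩ (mem_univ _)
      · simp [h, ha i]
    · funext i
      simp [proj, i.2]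

lemma proj_image_rep {m : ℕ} {F : Finset (Fin m → ℝ)}
    (hF : ∀ a ∈ F, ∀ i, 0 ≤ a i) (S : Finset (Fin m)) :
    proj S '' (⋃ a ∈ F, anchoredBox a)
      = ⋃ a ∈ F, Set.pi Set.univ fun i : S => Set.Icc (0:ℝ) (a i.1) := by
  rw [image_iUnion₂]
  exact iUnion₂_congr fun a ha => proj_image_box S a (hF a ha)

lemma rep_closed {m : ℕ} (F : Finset (Fin m → ℝ)) (S : Finset (Fin m)) :
    IsClosed (⋃ a ∈ F, Set.pi Set.univ fun i : S => Set.Icc (0:ℝ) (a i.1)) := by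
  apply Set.Finite.isClosed_biUnion F.finite_toSet
  intro a _
  exact isClosed_set_pi fun i _ => isClosed_Icc

lemma rep_volume_ne_top {m : ℕ} (F : Finset (Fin m → ℝ)) (S : Finset (Fin m)) :
    volume (⋃ a ∈ F, Set.pi Set.univ fun i : S => Set.Icc (0:ℝ) (a i.1)) ≠ ⊤ := by
  refine ne_top_of_le_ne_top ?_ (measure_biUnion_finset_le F _)
  refine (ENNReal.sum_lt_top.2 fun a _ => ?_).ne
  rw [volume_pi_pi]
  exact ENNReal.prod_lt_top fun i _ => by simp [Real.volume_Icc]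

theorem magnitude_strict_set_monotonicity {m : ℕ} (D E : Set (Fin m → ℝ))
    (hD : FiniteUnionOfAnchoredBoxes D) (hE : FiniteUnionOfAnchoredBoxes E)
    (hDE : D ⊂ E) :
    Mag D < Mag E := by
  obtain ⟨FD, hFD, hDrep⟩ := hD
  obtain ⟨FE, hFE, hErep⟩ := hE
  -- finiteness of all projected volumes
  have hfinD : ∀ S : Finset (Fin m), volume (proj S '' D) ≠ ⊤ := fun S => by
    rw [hDrep, proj_image_rep hFD]; exact rep_volume_ne_top FD S
  have hfinE : ∀ S : Finset (Fin m), volume (proj S '' E) ≠ ⊤ := fun S => by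
    rw [hErep, proj_image_rep hFE]; exact rep_volume_ne_top FE S
  -- pick x ∈ E \ D
  obtain ⟨x, hxE, hxD⟩ := exists_of_ssubset hDE
  -- x lies in some anchored box of E
  have hxbox : ∃ b ∈ FE, x ∈ anchoredBox b := by
    rw [hErep] at hxE
    simpa using hxE
  obtain ⟨b, hbFE, hxb⟩ := hxbox
  have hx0 : ∀ i, 0 ≤ x i := fun i => (hxb i (mem_univ _)).1
  have hxble : ∀ i, x i ≤ b i := fun i => (hxb i (mem_univ _)).2
  -- the key finset of positive coordinates
  set T : Finset (Fin m) := Finset.univ.filter (fun i => 0 < x i) with hT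
  have hmemT : ∀ i : Fin m, i ∈ T ↔ 0 < x i := by
    intro i; simp [hT]
  -- proj T x ∉ proj T '' D
  have hkey : proj T x ∉ proj T '' D := by
    rintro ⟨y, hyD, hyx⟩
    apply hxD
    rw [hDrep] at hyD ⊢
    simp only [mem_iUnion] at hyD ⊢
    obtain ⟨a, haFD, hya⟩ := hyD
    refine ⟨a, haFD, fun i _ => ?_⟩
    constructor
    · exact hx0 i
    · by_cases h : i ∈ T
      · have : y i = x i := congrFun hyx ⟨i, h⟩
        calc x i = y i := this.symm
          _ ≤ a i := (hya i (mem_univ _)).2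
      · have hxi : x i = 0 := le_antisymm (by simpa [hmemT i] using h) (hx0 i)
        rw [hxi]; exact hFD a haFD i
  -- strict volume inequality at T
  have hstrict : volume (proj T '' D) < volume (proj T '' E) := by
    by_cases hTe : T = ∅
    · -- zero-dimensional case
      haveI : IsEmpty (↥T) := Finset.isEmpty_coe_sort.2 hTe
      have hsub : ∀ q : (↥T) → ℝ, q = proj T x := fun q => funext fun i => isEmptyElim i
      have hDempty : proj T '' D = ∅ := by
        rw [eq_empty_iff_forall_notMem]
        intro q hq
        exact hkey (hsub q ▸ hq)
      have hEuniv : proj T '' E = univ := by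
        apply eq_univ_of_forall
        intro q
        rw [hsub q]
        exact mem_image_of_mem _ hxE
      rw [hDempty, hEuniv]
      have : volume (univ : Set ((↥T) → ℝ)) = 1 := by
        rw [← Set.pi_univ Set.univ, volume_pi_pi]
        simp
      simp [this]
    · -- T nonempty
      have hTne : T.Nonempty := Finset.nonempty_of_ne_empty hTe
      haveI : Nonempty (↥T) := ⟨⟨hTne.choose, hTne.choose_spec⟩⟩
      have hclosed : IsClosed (proj T '' D) := by
        rw [hDrep, proj_image_rep hFD]; exact rep_closed FD T
      obtain ⟨ε, hε, hball⟩ := Metric.isOpen_iff.1 hclosed.isOpen_compl _ hkey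
      -- δ : shrink
      set μmin : ℝ := Finset.univ.inf' Finset.univ_nonempty (fun i : ↥T => x i.1) with hμ
      have hμpos : 0 < μmin := by
        rw [hμ]
        apply Finset.lt_inf'_iff _ |>.2
        intro i _
        exact (hmemT i.1).1 i.2
      set δ : ℝ := min (ε / 2) μmin with hδdef
      have hδpos : 0 < δ := lt_min (by linarith) hμpos
      have hδμ : δ ≤ μmin := min_le_right _ _
      have hδε : δ < ε := lt_of_le_of_lt (min_le_left _ _) (by linarith)
      set K : Set ((↥T) → ℝ) := Set.pi Set.univ fun i : ↥T => Set.Icc (x i.1 - δ) (x i.1) with hK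
      have hKball : K ⊆ Metric.ball (proj T x) ε := by
        intro q hq
        rw [Metric.mem_ball, dist_pi_lt_iff hε]
        intro i
        have h1 := hq i (mem_univ _)
        obtain ⟨h1a, h1b⟩ := h1
        rw [Real.dist_eq]
        have habs : |q i - x i.1| ≤ δ := abs_le.2 ⟨by linarith, by linarith⟩
        calc |q i - proj T x i| = |q i - x i.1| := rfl
          _ ≤ δ := habs
          _ < ε := hδε
      -- K disjoint from proj T '' D
      have hKdisj : Disjoint (proj T '' D) K := by
        rw [Set.disjoint_right]
        intro q hqK hqD
        exact hball (hKball hqK) hqD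
      -- K ⊆ proj T '' E
      have hKE : K ⊆ proj T '' E := by
        intro q hq
        refine ⟨fun i => if h : i ∈ T then q ⟨i, h⟩ else 0, ?_, ?_⟩
        · rw [hErep]
          simp only [mem_iUnion]
          refine ⟨b, hbFE, fun i _ => ?_⟩
          by_cases h : i ∈ T
          · obtain ⟨h1a, h1b⟩ := hq ⟨i, h⟩ (mem_univ _)
            have hxi : 0 < x i := (hmemT i).1 h
            have hμle : μmin ≤ x i := Finset.inf'_le _ (Finset.mem_univ (⟨i, h⟩ : ↥T))
            simp only [h, dif_pos]
            exact ⟨by linarith, le_trans h1b (hxble i)⟩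
          · simp only [h, dif_neg, not_false_iff]
            exact ⟨le_refl 0, hFE b hbFE i⟩
        · funext i
          simp [proj, i.2]
      -- K is measurable with positive volume
      have hKmeas : MeasurableSet K := by
        rw [hK]
        exact MeasurableSet.univ_pi fun i => measurableSet_Icc
      have hKvol : volume K ≠ 0 := by
        rw [hK, volume_pi_pi]
        refine Finset.prod_ne_zero_iff.2 fun i _ => ?_
        rw [Real.volume_Icc]
        simp only [ne_eq, ENNReal.ofReal_eq_zero, not_le]
        linarith
      -- conclude
      calc volume (proj T '' D)
          < volume (proj T '' D) + volume K := ENNReal.lt_add_right (hfinD T) hKvol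
        _ = volume (proj T '' D ∪ K) := (measure_union hKdisj hKmeas).symm
        _ ≤ volume (proj T '' E) := measure_mono (union_subset (image_mono hDE.subset) hKE)
  -- assemble the sum
  unfold Mag
  apply Finset.sum_lt_sum
  · intro S _
    apply mul_le_mul_of_nonneg_left _ (by positivity)
    exact ENNReal.toReal_mono (hfinE S) (measure_mono (image_mono hDE.subset))
  · refine ⟨T, Finset.mem_univ T, ?_⟩
    apply mul_lt_mul_of_pos_left _ (by positivity)
    exact (ENNReal.toReal_lt_toReal (hfinD T) (hfinE T)).2 hstrict
end

section
/- The function HV(t_1,…,t_μ) = ∑_{i=1}^μ (t_i − t_{i−1})(4 − t_i) (with t_0 = 0) over the region 0 ≤ t_1 ≤ ⋯ ≤ t_μ ≤ 4 is uniquely maximized at the arithmetic progression t_i = 4i/(μ+1), i = 1,…,μ. -/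
open Finset

/-- Feasibility: `0 = t 0 ≤ t 1 ≤ ⋯ ≤ t μ ≤ 4`. -/
def Feasible (μ : ℕ) (t : ℕ → ℝ) : Prop :=
  t 0 = 0 ∧ (∀ i < μ, t i ≤ t (i + 1)) ∧ t μ ≤ 4

/-- The hypervolume of the dominated region on the linear front. -/
def HV (μ : ℕ) (t : ℕ → ℝ) : ℝ :=
  ∑ i ∈ Finset.Icc 1 μ, (t i - t (i - 1)) * (4 - t i)

lemma HV_range (μ : ℕ) (t : ℕ → ℝ) :
    HV μ t = ∑ i ∈ range μ, (t (i+1) - t i) * (4 - t (i+1)) := by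
  induction μ with
  | zero => simp [HV]
  | succ n ih =>
    rw [HV, Finset.sum_Icc_succ_top (by omega), ← HV, ih, Finset.sum_range_succ]
    simp

lemma sum1 (n : ℕ) (t : ℕ → ℝ) :
    ∑ i ∈ range n, (t (i+1) - t i) * (4 - t (i+1))
      = 4*(t n - t 0) - (t n^2 - t 0^2)/2
        - (∑ i ∈ range n, (t (i+1) - t i)^2)/2 := by
  induction n with
  | zero => simp
  | succ n ih => rw [Finset.sum_range_succ, Finset.sum_range_succ, ih]; ring

lemma sum2 (n : ℕ) (t : ℕ → ℝ) (c : ℝ) :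
    ∑ i ∈ range n, (t (i+1) - t i - c)^2
      = (∑ i ∈ range n, (t (i+1) - t i)^2) - 2*c*(t n - t 0) + n*c^2 := by
  induction n with
  | zero => simp
  | succ n ih =>
    rw [Finset.sum_range_succ, Finset.sum_range_succ, ih]
    push_cast; ring

lemma key (μ : ℕ) (t : ℕ → ℝ) (h0 : t 0 = 0) :
    HV μ t = (8 - 8/(μ+1))
      - (1/2) * ((∑ i ∈ range μ, (t (i+1) - t i - 4/(μ+1))^2)
        + (4 - t μ - 4/(μ+1))^2) := by
  have hne : ((μ : ℝ) + 1) ≠ 0 := by positivity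
  rw [HV_range, sum1, sum2, h0]
  field_simp
  ring

theorem hypervolume_unique_maximizer (μ : ℕ) (hμ : 1 ≤ μ) :
    Feasible μ (fun i => 4 * i / (μ + 1)) ∧
    (∀ t : ℕ → ℝ, Feasible μ t → HV μ t ≤ HV μ (fun i => 4 * i / (μ + 1))) ∧
    (∀ t : ℕ → ℝ, Feasible μ t → HV μ t = HV μ (fun i => 4 * i / (μ + 1)) →
      ∀ i ∈ Finset.Icc 1 μ, t i = 4 * i / (μ + 1)) := by
  have hne : ((μ : ℝ) + 1) ≠ 0 := by positivity
  have hpos : (0:ℝ) < (μ:ℝ) + 1 := by positivity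
  set opt : ℕ → ℝ := fun i => 4 * i / (μ + 1) with hopt
  have hopt0 : opt 0 = 0 := by simp [hopt]
  have hoptkey : HV μ opt = 8 - 8/(μ+1) := by
    rw [key μ opt hopt0]
    have h1 : ∀ i ∈ range μ, (opt (i+1) - opt i - 4/((μ:ℝ)+1))^2 = 0 := by
      intro i _
      have : opt (i+1) - opt i - 4/((μ:ℝ)+1) = 0 := by
        simp only [hopt]; push_cast; field_simp; ring
      rw [this]; ring
    rw [Finset.sum_eq_zero h1]
    have : 4 - opt μ - 4/((μ:ℝ)+1) = 0 := by
      simp only [hopt]; field_simp; ring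
    rw [this]; ring
  refine ⟨⟨hopt0, ?_, ?_⟩, ?_, ?_⟩
  · intro i _
    simp only [hopt]
    gcongr
    push_cast; linarith
  · simp only [hopt]
    rw [div_le_iff₀ hpos]; push_cast; linarith
  · intro t ht
    rw [key μ t ht.1, hoptkey]
    have h1 : (0:ℝ) ≤ ∑ i ∈ range μ, (t (i+1) - t i - 4/((μ:ℝ)+1))^2 :=
      Finset.sum_nonneg fun i _ => sq_nonneg _
    nlinarith [sq_nonneg (4 - t μ - 4/((μ:ℝ)+1))]
  · intro t ht heq i hi
    rw [key μ t ht.1, hoptkey] at heq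
    have h1 : (0:ℝ) ≤ ∑ i ∈ range μ, (t (i+1) - t i - 4/((μ:ℝ)+1))^2 :=
      Finset.sum_nonneg fun i _ => sq_nonneg _
    have h2 := sq_nonneg (4 - t μ - 4/((μ:ℝ)+1))
    have hS : ∑ i ∈ range μ, (t (i+1) - t i - 4/((μ:ℝ)+1))^2 = 0 := by linarith
    have hstep : ∀ j < μ, t (j+1) = t j + 4/((μ:ℝ)+1) := by
      intro j hj
      have := (Finset.sum_eq_zero_iff_of_nonneg (fun i _ => sq_nonneg _)).mp hS j
        (Finset.mem_range.mpr hj)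
      have := pow_eq_zero_iff (n := 2) (by norm_num) |>.mp this
      linarith
    have hall : ∀ j, j ≤ μ → t j = 4 * j / ((μ:ℝ)+1) := by
      intro j
      induction j with
      | zero => intro _; simpa using ht.1
      | succ j ihj =>
        intro hj
        rw [hstep j (by omega), ihj (by omega)]
        push_cast; field_simp
    exact hall i (Finset.mem_Icc.mp hi).2
end

section
/- For real u ≥ v ≥ w ≥ 0, the three-dimensional Lebesgue measure of the union of the six anchored boxes [0,σ(u)]×[0,σ(v)]×[0,σ(w)] over all permutations σ of the coordinates equals 6uvw − 3uw² − 3v²w + w³. -/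
open Set MeasureTheory

private def box3 (s t r : Set ℝ) : Set (Fin 3 → ℝ) := Set.pi Set.univ ![s, t, r]

private lemma mem_box3 {s t r : Set ℝ} {p : Fin 3 → ℝ} :
    p ∈ box3 s t r ↔ p 0 ∈ s ∧ p 1 ∈ t ∧ p 2 ∈ r := by
  simp [box3, Set.mem_univ_pi, Fin.forall_fin_succ]

private lemma vol_box3 (s t r : Set ℝ) :
    volume (box3 s t r) = volume s * volume t * volume r := by
  rw [box3, volume_pi_pi]
  simp [Fin.prod_univ_three]

private lemma meas_box3 {s t r : Set ℝ} (hs : MeasurableSet s) (ht : MeasurableSet t)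
    (hr : MeasurableSet r) : MeasurableSet (box3 s t r) := by
  apply MeasurableSet.univ_pi
  intro i
  fin_cases i <;> simpa

private lemma disj_box3_1 {s t r s' t' r' : Set ℝ} (h : Disjoint t t') :
    Disjoint (box3 s t r) (box3 s' t' r') := by
  rw [Set.disjoint_left]
  intro p hp hq
  rw [mem_box3] at hp hq
  exact Set.disjoint_left.mp h hp.2.1 hq.2.1

private lemma disj_box3_2 {s t r s' t' r' : Set ℝ} (h : Disjoint r r') :
    Disjoint (box3 s t r) (box3 s' t' r') := by
  rw [Set.disjoint_left]
  intro p hp hq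
  rw [mem_box3] at hp hq
  exact Set.disjoint_left.mp h hp.2.2 hq.2.2

private lemma disj_Icc_Ioc {a b c d : ℝ} (h : b ≤ c) : Disjoint (Icc a b) (Ioc c d) := by
  rw [Set.disjoint_left]
  rintro x ⟨_, h1⟩ ⟨h2, _⟩
  linarith

private lemma disj_Ioc_Ioc {a b c d : ℝ} (h : b ≤ c) : Disjoint (Ioc a b) (Ioc c d) := by
  rw [Set.disjoint_left]
  rintro x ⟨_, h1⟩ ⟨h2, _⟩
  linarith

private lemma fin3cases (k : Fin 3) : k = 0 ∨ k = 1 ∨ k = 2 := by fin_cases k <;> simp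

theorem symmetric_orbit_hypervolume (u v w : ℝ)
    (huv : v ≤ u) (hvw : w ≤ v) (hw : 0 ≤ w) :
    (volume (⋃ σ : Equiv.Perm (Fin 3),
        Set.pi Set.univ fun i => Set.Icc (0:ℝ) (![u, v, w] (σ i)))).toReal
      = 6 * u * v * w - 3 * u * w ^ 2 - 3 * v ^ 2 * w + w ^ 3 := by
  have hv0 : (0:ℝ) ≤ v := le_trans hw hvw
  have hu0 : (0:ℝ) ≤ u := le_trans hv0 huv
  have hSeq : (⋃ σ : Equiv.Perm (Fin 3),
        Set.pi Set.univ fun i => Set.Icc (0:ℝ) (![u, v, w] (σ i)))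
      = (box3 (Icc 0 u) (Icc 0 v) (Icc 0 w) ∪ box3 (Icc 0 v) (Ioc v u) (Icc 0 w)) ∪
        ((box3 (Icc 0 u) (Icc 0 w) (Ioc w v) ∪ box3 (Icc 0 w) (Ioc w u) (Ioc w v)) ∪
         (box3 (Icc 0 v) (Icc 0 w) (Ioc v u) ∪ box3 (Icc 0 w) (Ioc w v) (Ioc v u))) := by
    ext p
    simp only [mem_iUnion, Set.mem_univ_pi, mem_union, mem_box3, mem_Icc, mem_Ioc]
    constructor
    · rintro ⟨σ, hσ⟩
      have h0 : ∀ i, 0 ≤ p i := fun i => (hσ i).1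
      have hbu : ∀ k : Fin 3, ![u, v, w] k ≤ u := by
        intro k; fin_cases k <;> simp <;> linarith
      have hu : ∀ i, p i ≤ u := fun i => le_trans (hσ i).2 (hbu (σ i))
      have hwc : p (σ.symm 2) ≤ w := by
        have := (hσ (σ.symm 2)).2
        simpa using this
      have hvc : p (σ.symm 1) ≤ v := by
        have := (hσ (σ.symm 1)).2
        simpa using this
      have hne : σ.symm 1 ≠ σ.symm 2 := by
        intro h
        have := σ.symm.injective h
        simp at this
      have P3 : p 0 ≤ w ∨ p 1 ≤ w ∨ p 2 ≤ w := by
        rcases fin3cases (σ.symm 2) with h|h|h <;> rw [h] at hwc <;> tauto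
      have P2 : (p 0 ≤ v ∧ p 1 ≤ v) ∨ (p 0 ≤ v ∧ p 2 ≤ v) ∨ (p 1 ≤ v ∧ p 2 ≤ v) := by
        have hb : p (σ.symm 2) ≤ v := le_trans hwc hvw
        rcases fin3cases (σ.symm 1) with h1|h1|h1 <;> rcases fin3cases (σ.symm 2) with h2|h2|h2 <;>
          rw [h1] at hvc <;> rw [h2] at hb <;>
          first
            | exact absurd (h1.trans h2.symm) hne
            | tauto
      rcases le_or_gt (p 2) w with h2w | h2w
      · rcases le_or_gt (p 1) v with h1v | h1v
        · exact Or.inl (Or.inl ⟨⟨h0 0, hu 0⟩, ⟨h0 1, h1v⟩, ⟨h0 2, h2w⟩⟩)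
        · have h0v : p 0 ≤ v := by
            rcases P2 with ⟨h, h'⟩|⟨h, _⟩|⟨h, _⟩
            · linarith
            · exact h
            · linarith
          exact Or.inl (Or.inr ⟨⟨h0 0, h0v⟩, ⟨h1v, hu 1⟩, ⟨h0 2, h2w⟩⟩)
      · rcases le_or_gt (p 2) v with h2v | h2v
        · rcases le_or_gt (p 1) w with h1w | h1w
          · exact Or.inr (Or.inl (Or.inl ⟨⟨h0 0, hu 0⟩, ⟨h0 1, h1w⟩, ⟨h2w, h2v⟩⟩))
          · have h0w : p 0 ≤ w := by
              rcases P3 with h|h|h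
              · exact h
              · linarith
              · linarith
            exact Or.inr (Or.inl (Or.inr ⟨⟨h0 0, h0w⟩, ⟨h1w, hu 1⟩, ⟨h2w, h2v⟩⟩))
        · have h01 : p 0 ≤ v ∧ p 1 ≤ v := by
            rcases P2 with h|⟨_, h⟩|⟨_, h⟩
            · exact h
            · linarith
            · linarith
          rcases le_or_gt (p 1) w with h1w | h1w
          · exact Or.inr (Or.inr (Or.inl ⟨⟨h0 0, h01.1⟩, ⟨h0 1, h1w⟩, ⟨h2v, hu 2⟩⟩))
          · have h0w : p 0 ≤ w := by
              rcases P3 with h|h|h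
              · exact h
              · linarith
              · linarith
            exact Or.inr (Or.inr (Or.inr ⟨⟨h0 0, h0w⟩, ⟨h1w, h01.2⟩, ⟨h2v, hu 2⟩⟩))
    · rintro ((⟨⟨a0,b0⟩,⟨a1,b1⟩,⟨a2,b2⟩⟩ | ⟨⟨a0,b0⟩,⟨a1,b1⟩,⟨a2,b2⟩⟩) |
        ((⟨⟨a0,b0⟩,⟨a1,b1⟩,⟨a2,b2⟩⟩ | ⟨⟨a0,b0⟩,⟨a1,b1⟩,⟨a2,b2⟩⟩) |
         (⟨⟨a0,b0⟩,⟨a1,b1⟩,⟨a2,b2⟩⟩ | ⟨⟨a0,b0⟩,⟨a1,b1⟩,⟨a2,b2⟩⟩)))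
      · exact ⟨⟨![0,1,2], ![0,1,2], by decide, by decide⟩,
          by intro i; fin_cases i <;> simp <;> constructor <;> linarith⟩
      · exact ⟨⟨![1,0,2], ![1,0,2], by decide, by decide⟩,
          by intro i; fin_cases i <;> simp <;> constructor <;> linarith⟩
      · exact ⟨⟨![0,2,1], ![0,2,1], by decide, by decide⟩,
          by intro i; fin_cases i <;> simp <;> constructor <;> linarith⟩
      · exact ⟨⟨![2,0,1], ![1,2,0], by decide, by decide⟩,
          by intro i; fin_cases i <;> simp <;> constructor <;> linarith⟩
      · exact ⟨⟨![1,2,0], ![2,0,1], by decide, by decide⟩,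
          by intro i; fin_cases i <;> simp <;> constructor <;> linarith⟩
      · exact ⟨⟨![2,1,0], ![2,1,0], by decide, by decide⟩,
          by intro i; fin_cases i <;> simp <;> constructor <;> linarith⟩
  rw [hSeq]
  have m2 := meas_box3 (s := Icc (0:ℝ) v) (t := Ioc v u) (r := Icc 0 w)
    measurableSet_Icc measurableSet_Ioc measurableSet_Icc
  have m3 := meas_box3 (s := Icc (0:ℝ) u) (t := Icc 0 w) (r := Ioc w v)
    measurableSet_Icc measurableSet_Icc measurableSet_Ioc
  have m4 := meas_box3 (s := Icc (0:ℝ) w) (t := Ioc w u) (r := Ioc w v)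
    measurableSet_Icc measurableSet_Ioc measurableSet_Ioc
  have m5 := meas_box3 (s := Icc (0:ℝ) v) (t := Icc 0 w) (r := Ioc v u)
    measurableSet_Icc measurableSet_Icc measurableSet_Ioc
  have m6 := meas_box3 (s := Icc (0:ℝ) w) (t := Ioc w v) (r := Ioc v u)
    measurableSet_Icc measurableSet_Ioc measurableSet_Ioc
  have d12 : Disjoint (box3 (Icc (0:ℝ) u) (Icc 0 v) (Icc 0 w)) (box3 (Icc 0 v) (Ioc v u) (Icc 0 w)) :=
    disj_box3_1 (disj_Icc_Ioc le_rfl)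
  have d34 : Disjoint (box3 (Icc (0:ℝ) u) (Icc 0 w) (Ioc w v)) (box3 (Icc 0 w) (Ioc w u) (Ioc w v)) :=
    disj_box3_1 (disj_Icc_Ioc le_rfl)
  have d56 : Disjoint (box3 (Icc (0:ℝ) v) (Icc 0 w) (Ioc v u)) (box3 (Icc 0 w) (Ioc w v) (Ioc v u)) :=
    disj_box3_1 (disj_Icc_Ioc le_rfl)
  have dG23 : Disjoint
      (box3 (Icc (0:ℝ) u) (Icc 0 w) (Ioc w v) ∪ box3 (Icc 0 w) (Ioc w u) (Ioc w v))
      (box3 (Icc 0 v) (Icc 0 w) (Ioc v u) ∪ box3 (Icc 0 w) (Ioc w v) (Ioc v u)) := by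
    apply Set.disjoint_union_left.mpr
    constructor <;> apply Set.disjoint_union_right.mpr <;>
      exact ⟨disj_box3_2 (disj_Ioc_Ioc le_rfl), disj_box3_2 (disj_Ioc_Ioc le_rfl)⟩
  have dG1rest : Disjoint
      (box3 (Icc (0:ℝ) u) (Icc 0 v) (Icc 0 w) ∪ box3 (Icc 0 v) (Ioc v u) (Icc 0 w))
      ((box3 (Icc 0 u) (Icc 0 w) (Ioc w v) ∪ box3 (Icc 0 w) (Ioc w u) (Ioc w v)) ∪
       (box3 (Icc 0 v) (Icc 0 w) (Ioc v u) ∪ box3 (Icc 0 w) (Ioc w v) (Ioc v u))) := by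
    apply Set.disjoint_union_left.mpr
    constructor <;> apply Set.disjoint_union_right.mpr <;>
      refine ⟨Set.disjoint_union_right.mpr ⟨?_, ?_⟩, Set.disjoint_union_right.mpr ⟨?_, ?_⟩⟩ <;>
      exact disj_box3_2 (disj_Icc_Ioc (by linarith))
  rw [measure_union dG1rest (((m3.union m4).union (m5.union m6))),
    measure_union d12 m2, measure_union dG23 (m5.union m6),
    measure_union d34 m4, measure_union d56 m6]
  simp only [vol_box3, Real.volume_Icc, Real.volume_Ioc, sub_zero]
  have hfin : ∀ a b c : ℝ, ENNReal.ofReal a * ENNReal.ofReal b * ENNReal.ofReal c ≠ ⊤ :=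
    fun a b c => ENNReal.mul_ne_top (ENNReal.mul_ne_top ENNReal.ofReal_ne_top
      ENNReal.ofReal_ne_top) ENNReal.ofReal_ne_top
  rw [ENNReal.toReal_add (ENNReal.add_ne_top.mpr ⟨hfin _ _ _, hfin _ _ _⟩)
      (ENNReal.add_ne_top.mpr ⟨ENNReal.add_ne_top.mpr ⟨hfin _ _ _, hfin _ _ _⟩,
        ENNReal.add_ne_top.mpr ⟨hfin _ _ _, hfin _ _ _⟩⟩),
    ENNReal.toReal_add (hfin _ _ _) (hfin _ _ _),
    ENNReal.toReal_add (ENNReal.add_ne_top.mpr ⟨hfin _ _ _, hfin _ _ _⟩)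
      (ENNReal.add_ne_top.mpr ⟨hfin _ _ _, hfin _ _ _⟩),
    ENNReal.toReal_add (hfin _ _ _) (hfin _ _ _),
    ENNReal.toReal_add (hfin _ _ _) (hfin _ _ _)]
  simp only [ENNReal.toReal_mul, ENNReal.toReal_ofReal hu0, ENNReal.toReal_ofReal hv0,
    ENNReal.toReal_ofReal hw, ENNReal.toReal_ofReal (by linarith : (0:ℝ) ≤ u - v),
    ENNReal.toReal_ofReal (by linarith : (0:ℝ) ≤ v - w),
    ENNReal.toReal_ofReal (by linarith : (0:ℝ) ≤ u - w)]
  ring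
end

section
/- Maximize f(u,v,w) = 6uvw − 3uw² − 3v²w + w³ subject to u + v + w = 1 and u ≥ v ≥ w ≥ 0. The unique maximizer is u = (62 + 5√13)/153, v = (43 + √13)/153, w = (48 − 6√13)/153. -/
/-- The hypervolume of the dominated region of the symmetric six-point orbit. -/
def f (u v w : ℝ) : ℝ := 6 * u * v * w - 3 * u * w ^ 2 - 3 * v ^ 2 * w + w ^ 3

/-- Feasibility on the simplex with ordered coordinates. -/
def SimplexFeasible (u v w : ℝ) : Prop := u + v + w = 1 ∧ v ≤ u ∧ w ≤ v ∧ 0 ≤ w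

lemma sqrt13_sq : Real.sqrt 13 ^ 2 = 13 := Real.sq_sqrt (by norm_num)

lemma sqrt13_lb : (3 : ℝ) ≤ Real.sqrt 13 := by
  nlinarith [Real.sq_sqrt (show (13:ℝ) ≥ 0 by norm_num),
    Real.sqrt_nonneg (13:ℝ)]

lemma sqrt13_ub : Real.sqrt 13 ≤ 4 := by
  nlinarith [Real.sq_sqrt (show (13:ℝ) ≥ 0 by norm_num),
    Real.sqrt_nonneg (13:ℝ)]

/-- Key identity: the gap equals a sum of two manifestly nonnegative terms. -/
lemma key_identity (u v w : ℝ) (h : u + v + w = 1) :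
    f ((62 + 5 * Real.sqrt 13) / 153) ((43 + Real.sqrt 13) / 153)
        ((48 - 6 * Real.sqrt 13) / 153) - f u v w
      = 9 * w * ((v - (43 + Real.sqrt 13) / 153)
          + (w - (48 - 6 * Real.sqrt 13) / 153) / 6) ^ 2
        + (w - (48 - 6 * Real.sqrt 13) / 153) ^ 2
          * (Real.sqrt 13 / 2 - 17 * (w - (48 - 6 * Real.sqrt 13) / 153) / 4) := by
  have hu : u = 1 - v - w := by linarith
  subst hu
  have hs : Real.sqrt 13 ^ 2 = 13 := sqrt13_sq
  unfold f
  linear_combination (16 / 2601 - 2 * Real.sqrt 13 / 2601 - w / 51) * hs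

lemma gap_terms (u v w : ℝ) (hf : SimplexFeasible u v w) :
    0 ≤ 9 * w * ((v - (43 + Real.sqrt 13) / 153)
          + (w - (48 - 6 * Real.sqrt 13) / 153) / 6) ^ 2 ∧
    0 ≤ Real.sqrt 13 / 2 - 17 * (w - (48 - 6 * Real.sqrt 13) / 153) / 4 := by
  obtain ⟨h1, h2, h3, h4⟩ := hf
  constructor
  · positivity
  · have hw3 : w ≤ 1 / 3 := by linarith
    nlinarith [sqrt13_lb]

set_option maxHeartbeats 1000000 in
theorem hypervolume_simplex_unique_maximizer :
    SimplexFeasible ((62 + 5 * Real.sqrt 13) / 153) ((43 + Real.sqrt 13) / 153)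
      ((48 - 6 * Real.sqrt 13) / 153) ∧
    (∀ u v w : ℝ, SimplexFeasible u v w →
      f u v w ≤ f ((62 + 5 * Real.sqrt 13) / 153) ((43 + Real.sqrt 13) / 153)
        ((48 - 6 * Real.sqrt 13) / 153)) ∧
    (∀ u v w : ℝ, SimplexFeasible u v w →
      f u v w = f ((62 + 5 * Real.sqrt 13) / 153) ((43 + Real.sqrt 13) / 153)
        ((48 - 6 * Real.sqrt 13) / 153) →
      u = (62 + 5 * Real.sqrt 13) / 153 ∧ v = (43 + Real.sqrt 13) / 153 ∧
        w = (48 - 6 * Real.sqrt 13) / 153) := by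
  have hlb := sqrt13_lb
  have hub := sqrt13_ub
  refine ⟨⟨by ring, by nlinarith, by nlinarith, by nlinarith⟩, ?_, ?_⟩
  · intro u v w hf
    have hid := key_identity u v w hf.1
    obtain ⟨hA, hB⟩ := gap_terms u v w hf
    nlinarith [mul_nonneg (sq_nonneg (w - (48 - 6 * Real.sqrt 13) / 153)) hB]
  · intro u v w hf heq
    have hid := key_identity u v w hf.1
    obtain ⟨hA, hB⟩ := gap_terms u v w hf
    obtain ⟨h1, h2, h3, h4⟩ := hf
    rw [heq] at hid
    -- both nonnegative terms sum to zero
    have hBB : 0 ≤ (w - (48 - 6 * Real.sqrt 13) / 153) ^ 2 * (Real.sqrt 13 / 2 - 17 * (w - (48 - 6 * Real.sqrt 13) / 153) / 4) :=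
      mul_nonneg (sq_nonneg _) hB
    have hAz : 9 * w * ((v - (43 + Real.sqrt 13) / 153)
          + (w - (48 - 6 * Real.sqrt 13) / 153) / 6) ^ 2 = 0 := by linarith
    have hBz : (w - (48 - 6 * Real.sqrt 13) / 153) ^ 2
          * (Real.sqrt 13 / 2 - 17 * (w - (48 - 6 * Real.sqrt 13) / 153) / 4) = 0 := by linarith
    -- second factor of B is strictly positive since w ≤ 1/3 < w* + 2√13/17
    have hw3 : w ≤ 1 / 3 := by linarith
    have hBpos : 0 < Real.sqrt 13 / 2 - 17 * (w - (48 - 6 * Real.sqrt 13) / 153) / 4 := by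
      nlinarith
    have hwz : w = (48 - 6 * Real.sqrt 13) / 153 := by
      have := mul_eq_zero.mp hBz
      rcases this with h | h
      · have := pow_eq_zero_iff (n := 2) (by norm_num) |>.mp h
        linarith
      · linarith
    have hwpos : 0 < w := by rw [hwz]; nlinarith
    have hexpr : (v - (43 + Real.sqrt 13) / 153)
        + (w - (48 - 6 * Real.sqrt 13) / 153) / 6 = 0 := by
      have hsq : ((v - (43 + Real.sqrt 13) / 153)
          + (w - (48 - 6 * Real.sqrt 13) / 153) / 6) ^ 2 = 0 := by
        rcases mul_eq_zero.mp hAz with h | h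
        · linarith
        · exact h
      exact pow_eq_zero_iff two_ne_zero |>.mp hsq
    have hvz : v = (43 + Real.sqrt 13) / 153 := by
      have hd : w - (48 - 6 * Real.sqrt 13) / 153 = 0 := by rw [hwz]; ring
      rw [hd] at hexpr
      linarith
    exact ⟨by rw [hvz] at h1; rw [hwz] at h1; linarith, hvz, hwz⟩
end

section
/- For H ≥ 1 and integers 1 ≤ a, b, c ≤ H, the grid cell C_{abc} = [(a−1)/H, a/H] × [(b−1)/H, b/H] × [(c−1)/H, c/H] is contained in U_H = ⋃_{p ∈ G_H} [0,p] if and only if a + b + c ≤ H, where G_H = {(i/H, j/H, k/H) : i,j,k ∈ ℕ₀, i+j+k = H}. -/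
open Set

/-- The complete Das–Dennis grid of level `H` on the unit simplex in `ℝ³`. -/
def dasDennisGrid (H : ℕ) : Set (ℝ × ℝ × ℝ) :=
  {p | ∃ i j k : ℕ, i + j + k = H ∧
    p = ((i : ℝ) / H, (j : ℝ) / H, (k : ℝ) / H)}

/-- The dominated region generated by the level-`H` Das–Dennis grid. -/
def U (H : ℕ) : Set (ℝ × ℝ × ℝ) :=
  ⋃ p ∈ dasDennisGrid H, Set.Icc (0:ℝ) p.1 ×ˢ (Set.Icc (0:ℝ) p.2.1 ×ˢ Set.Icc (0:ℝ) p.2.2)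

theorem staircase_cell_criterion (H : ℕ) (hH : 1 ≤ H) (a b c : ℕ)
    (ha : 1 ≤ a) (ha' : a ≤ H) (hb : 1 ≤ b) (hb' : b ≤ H) (hc : 1 ≤ c) (hc' : c ≤ H) :
    (Set.Icc (((a : ℝ) - 1) / H) ((a : ℝ) / H) ×ˢ
      (Set.Icc (((b : ℝ) - 1) / H) ((b : ℝ) / H) ×ˢ
        Set.Icc (((c : ℝ) - 1) / H) ((c : ℝ) / H)) ⊆ U H) ↔ a + b + c ≤ H := by
  have hH0 : (0:ℝ) < H := by exact_mod_cast hH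
  constructor
  · intro hsub
    have hcorner : ((a : ℝ)/H, (b : ℝ)/H, (c : ℝ)/H) ∈
        Set.Icc (((a : ℝ) - 1) / H) ((a : ℝ) / H) ×ˢ
          (Set.Icc (((b : ℝ) - 1) / H) ((b : ℝ) / H) ×ˢ
            Set.Icc (((c : ℝ) - 1) / H) ((c : ℝ) / H)) := by
      refine ⟨⟨?_, le_refl _⟩, ⟨?_, le_refl _⟩, ⟨?_, le_refl _⟩⟩ <;>
        exact div_le_div_of_nonneg_right (by linarith) hH0.le
    have := hsub hcorner
    simp only [U, dasDennisGrid, Set.mem_iUnion, Set.mem_setOf_eq] at this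
    obtain ⟨p, ⟨i, j, k, hijk, rfl⟩, hmem⟩ := this
    obtain ⟨⟨_, h1⟩, ⟨_, h2⟩, ⟨_, h3⟩⟩ := hmem
    have hai : a ≤ i := by
      have : (a:ℝ) ≤ i := by
        have := (div_le_div_iff_of_pos_right hH0).mp h1; exact this
      exact_mod_cast this
    have hbj : b ≤ j := by
      have : (b:ℝ) ≤ j := (div_le_div_iff_of_pos_right hH0).mp h2
      exact_mod_cast this
    have hck : c ≤ k := by
      have : (c:ℝ) ≤ k := (div_le_div_iff_of_pos_right hH0).mp h3
      exact_mod_cast this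
    omega
  · intro habc
    intro x hx
    obtain ⟨⟨hx1l, hx1r⟩, ⟨hx2l, hx2r⟩, ⟨hx3l, hx3r⟩⟩ := hx
    simp only [U, dasDennisGrid, Set.mem_iUnion, Set.mem_setOf_eq]
    refine ⟨((a : ℝ)/H, (b : ℝ)/H, ((H - a - b : ℕ) : ℝ)/H), ⟨a, b, H - a - b, by omega, rfl⟩,
      ⟨⟨?_, hx1r⟩, ⟨?_, hx2r⟩, ⟨?_, ?_⟩⟩⟩
    · refine le_trans (div_nonneg ?_ hH0.le) hx1l
      have : (1:ℝ) ≤ a := by exact_mod_cast ha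
      linarith
    · refine le_trans (div_nonneg ?_ hH0.le) hx2l
      have : (1:ℝ) ≤ b := by exact_mod_cast hb
      linarith
    · refine le_trans (div_nonneg ?_ hH0.le) hx3l
      have : (1:ℝ) ≤ c := by exact_mod_cast hc
      linarith
    · refine hx3r.trans (div_le_div_of_nonneg_right ?_ hH0.le)
      have : (c:ℝ) ≤ ((H - a - b : ℕ) : ℝ) := by exact_mod_cast (by omega : c ≤ H - a - b)
      exact this
end

section
/- For every integer H ≥ 1, the three-dimensional Lebesgue measure of U_H = ⋃_{p ∈ G_H} [0,p] equals (H−1)(H−2)/(6H²), and the area of each two-dimensional coordinate projection of U_H equals (H−1)/(2H). -/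
open Set MeasureTheory

/-! ### Auxiliary counting lemmas -/

def P2 (H : ℕ) : Finset (ℕ × ℕ) :=
  (Finset.range H ×ˢ Finset.range H).filter (fun t => t.1 + t.2 + 2 ≤ H)

lemma mem_P2 {H : ℕ} {t : ℕ × ℕ} : t ∈ P2 H ↔ t.1 + t.2 + 2 ≤ H := by
  simp only [P2, Finset.mem_filter, Finset.mem_product, Finset.mem_range]
  omega

lemma sum_range_succ_two (n : ℕ) : 2 * ∑ s ∈ Finset.range n, (s+1) = n * (n+1) := by
  induction n with
  | zero => simp
  | succ n ih => rw [Finset.sum_range_succ, Nat.mul_add, ih]; ring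

lemma card_P2 (H : ℕ) : 2 * (P2 H).card = (H - 1) * H := by
  have he : P2 H = (Finset.range (H-1)).biUnion Finset.HasAntidiagonal.antidiagonal := by
    ext ⟨a, b⟩
    simp only [mem_P2, Finset.mem_biUnion, Finset.mem_range, Finset.HasAntidiagonal.mem_antidiagonal]
    constructor
    · intro h; exact ⟨a + b, by omega, rfl⟩
    · rintro ⟨i, hi, rfl⟩; omega
  rw [he, Finset.card_biUnion]
  · simp only [Finset.Nat.card_antidiagonal]
    rw [sum_range_succ_two]
    cases H <;> simp [Nat.succ_sub_one]
  · intro x _ y _ hxy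
    simp only [Finset.disjoint_left, Finset.HasAntidiagonal.mem_antidiagonal]
    omega

def P3 (H : ℕ) : Finset (ℕ × ℕ × ℕ) :=
  (Finset.range H ×ˢ Finset.range H ×ˢ Finset.range H).filter
    (fun t => t.1 + t.2.1 + t.2.2 + 3 ≤ H)

lemma mem_P3 {H : ℕ} {t : ℕ × ℕ × ℕ} : t ∈ P3 H ↔ t.1 + t.2.1 + t.2.2 + 3 ≤ H := by
  simp only [P3, Finset.mem_filter, Finset.mem_product, Finset.mem_range]
  omega

lemma sum_sq (n : ℕ) : 3 * ∑ m ∈ Finset.range n, ((m-1)*m) = (n-2)*((n-1)*n) := by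
  induction n with
  | zero => simp
  | succ n ih =>
    rw [Finset.sum_range_succ, Nat.mul_add, ih]
    rcases n with _|_|n
    · simp
    · simp
    · have h1 : n + 1 + 1 - 2 = n := by omega
      have h2 : n + 1 + 1 - 1 = n + 1 := by omega
      have h3 : n + 1 + 1 + 1 - 2 = n + 1 := by omega
      have h4 : n + 1 + 1 + 1 - 1 = n + 2 := by omega
      rw [h1, h2, h3, h4]
      ring

lemma card_P3 (H : ℕ) : 6 * (P3 H).card = (H - 2) * ((H - 1) * H) := by
  have hf : (P3 H).card = ∑ a ∈ Finset.range H, ((P3 H).filter (fun t => t.1 = a)).card :=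
    Finset.card_eq_sum_card_fiberwise (fun t ht => by
      simp only [Finset.mem_coe, Finset.mem_range]; have := mem_P3.1 ht; omega)
  have hfib : ∀ a, ((P3 H).filter (fun t => t.1 = a)).card = (P2 (H - 1 - a)).card := by
    intro a
    apply Finset.card_bij (fun t _ => t.2)
    · rintro ⟨x, y, z⟩ ht
      simp only [Finset.mem_filter] at ht
      obtain ⟨ht, rfl⟩ := ht
      have := mem_P3.1 ht
      exact mem_P2.2 (by simp at this ⊢; omega)
    · rintro ⟨x, y, z⟩ h1 ⟨x', y', z'⟩ h2 h
      simp only [Finset.mem_filter] at h1 h2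
      simp only [Prod.mk.injEq] at h ⊢
      exact ⟨h1.2.trans h2.2.symm, h⟩
    · rintro ⟨y, z⟩ hyz
      have := mem_P2.1 hyz
      simp only [] at this
      exact ⟨(a, y, z), Finset.mem_filter.2 ⟨mem_P3.2 (by simp; omega), rfl⟩, rfl⟩
  calc 6 * (P3 H).card
      = 3 * ∑ a ∈ Finset.range H, 2 * (P2 (H - 1 - a)).card := by
        rw [hf, Finset.mul_sum, Finset.mul_sum]
        exact Finset.sum_congr rfl (fun a _ => by rw [hfib]; ring)
    _ = 3 * ∑ a ∈ Finset.range H, ((H - 1 - a - 1) * (H - 1 - a)) := by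
        simp only [card_P2]
    _ = 3 * ∑ m ∈ Finset.range H, ((m - 1) * m) := by
        rw [← Finset.sum_range_reflect]
        exact congrArg _ (Finset.sum_congr rfl (fun a ha => by
          simp only [Finset.mem_range] at ha
          congr 1 <;> omega))
    _ = (H - 2) * ((H - 1) * H) := sum_sq H

/-! ### Cell lemmas -/

lemma ceil_cell {H : ℕ} (hH : 1 ≤ H) {x : ℝ} {i : ℕ} (hx : 0 < x) (hxi : x ≤ (i:ℝ)/H) :
    ∃ a : ℕ, a + 1 ≤ i ∧ x ∈ Set.Ioc ((a:ℝ)/H) (((a:ℝ)+1)/H) := by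
  have hH0 : (0:ℝ) < H := by exact_mod_cast hH
  set n := ⌈(H:ℝ)*x⌉₊ with hn
  have hn1 : 1 ≤ n := Nat.ceil_pos.2 (by positivity)
  have hni : n ≤ i := Nat.ceil_le.2 (by rw [← le_div_iff₀' hH0]; exact hxi)
  have hlt : (n:ℝ) < (H:ℝ)*x + 1 := Nat.ceil_lt_add_one (by positivity)
  have hle : (H:ℝ)*x ≤ n := Nat.le_ceil _
  refine ⟨n - 1, by omega, ?_, ?_⟩
  · have hcast : ((n-1:ℕ):ℝ) = (n:ℝ) - 1 := by
      push_cast [hn1]; ring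
    rw [hcast, div_lt_iff₀ hH0]
    linarith [mul_comm x (H:ℝ)]
  · have hcast : ((n-1:ℕ):ℝ) + 1 = (n:ℝ) := by
      have : ((n-1:ℕ):ℝ) = (n:ℝ) - 1 := by push_cast [hn1]; ring
      rw [this]; ring
    rw [hcast, le_div_iff₀ hH0]
    linarith [mul_comm x (H:ℝ)]

lemma cell_disj {H : ℕ} (hH0 : (0:ℝ) < H) {a b : ℕ} (hab : a ≠ b) :
    Disjoint (Set.Ioc ((a:ℝ)/H) (((a:ℝ)+1)/H)) (Set.Ioc ((b:ℝ)/H) (((b:ℝ)+1)/H)) := by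
  rw [Set.Ioc_disjoint_Ioc]
  rcases lt_or_gt_of_ne hab with h | h
  · have h1 : (a:ℝ) + 1 ≤ (b:ℝ) := by exact_mod_cast h
    calc min (((a:ℝ)+1)/H) (((b:ℝ)+1)/H) ≤ ((a:ℝ)+1)/H := min_le_left _ _
      _ ≤ (b:ℝ)/H := by gcongr
      _ ≤ max ((a:ℝ)/H) ((b:ℝ)/H) := le_max_right _ _
  · have h1 : (b:ℝ) + 1 ≤ (a:ℝ) := by exact_mod_cast h
    calc min (((a:ℝ)+1)/H) (((b:ℝ)+1)/H) ≤ ((b:ℝ)+1)/H := min_le_right _ _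
      _ ≤ (a:ℝ)/H := by gcongr
      _ ≤ max ((a:ℝ)/H) ((b:ℝ)/H) := le_max_left _ _

/-! ### 2D volume -/

def A2 (H : ℕ) : Set (ℝ × ℝ) :=
  ⋃ (i : ℕ) (j : ℕ) (_ : i + j ≤ H), Set.Icc (0:ℝ) ((i:ℝ)/H) ×ˢ Set.Icc (0:ℝ) ((j:ℝ)/H)

lemma mem_A2 {H : ℕ} {q : ℝ × ℝ} : q ∈ A2 H ↔ ∃ i j : ℕ, i + j ≤ H ∧
    (0 ≤ q.1 ∧ q.1 ≤ (i:ℝ)/H) ∧ (0 ≤ q.2 ∧ q.2 ≤ (j:ℝ)/H) := by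
  simp only [A2, Set.mem_iUnion, Set.mem_prod, Set.mem_Icc, exists_prop]

def Z2 : Set (ℝ × ℝ) := ({0} ×ˢ (Set.univ : Set ℝ)) ∪ ((Set.univ : Set ℝ) ×ˢ {0})

lemma vol_Z2 : volume Z2 = 0 := by
  refine le_antisymm ((measure_union_le _ _).trans ?_) zero_le
  rw [Measure.volume_eq_prod, Measure.prod_prod, Measure.prod_prod]
  simp

def cell2 (H : ℕ) (t : ℕ × ℕ) : Set (ℝ × ℝ) :=
  Set.Ioc ((t.1:ℝ)/H) (((t.1:ℝ)+1)/H) ×ˢ Set.Ioc ((t.2:ℝ)/H) (((t.2:ℝ)+1)/H)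

lemma vol_cell2 {H : ℕ} (hH : 1 ≤ H) (t : ℕ × ℕ) :
    volume (cell2 H t) = ENNReal.ofReal (1/(H:ℝ)^2) := by
  have hH0 : (0:ℝ) < H := by exact_mod_cast hH
  have key : ∀ a : ℕ, (((a:ℝ)+1)/H - (a:ℝ)/H) = 1/H := fun a => by field_simp; ring
  rw [cell2, Measure.volume_eq_prod, Measure.prod_prod, Real.volume_Ioc, Real.volume_Ioc,
    key, key, ← ENNReal.ofReal_mul (by positivity)]
  congr 1
  ring

lemma vol_D2 {H : ℕ} (hH : 1 ≤ H) :
    volume (⋃ t ∈ P2 H, cell2 H t) = (P2 H).card * ENNReal.ofReal (1/(H:ℝ)^2) := by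
  have hH0 : (0:ℝ) < H := by exact_mod_cast hH
  rw [measure_biUnion_finset]
  · rw [Finset.sum_congr rfl (fun t _ => vol_cell2 hH t), Finset.sum_const, nsmul_eq_mul]
  · intro s _ t _ hst
    by_cases h1 : s.1 = t.1
    · have h2 : s.2 ≠ t.2 := fun h2 => hst (Prod.ext h1 h2)
      exact Set.Disjoint.set_prod_right (cell_disj hH0 h2) _ _
    · exact Set.Disjoint.set_prod_left (cell_disj hH0 h1) _ _
  · exact fun t _ => (measurableSet_Ioc).prod measurableSet_Ioc

lemma vol_A2 {H : ℕ} (hH : 1 ≤ H) :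
    volume (A2 H) = (P2 H).card * ENNReal.ofReal (1/(H:ℝ)^2) := by
  have hH0 : (0:ℝ) < H := by exact_mod_cast hH
  have hsub1 : (⋃ t ∈ P2 H, cell2 H t) ⊆ A2 H := by
    rintro ⟨x, y⟩ hq
    simp only [Set.mem_iUnion, exists_prop] at hq
    obtain ⟨⟨a, b⟩, ht, hx, hy⟩ := hq
    have hab := mem_P2.1 ht
    refine mem_A2.2 ⟨a + 1, b + 1, by omega, ⟨?_, by push_cast; exact hx.2⟩,
      ⟨?_, by push_cast; exact hy.2⟩⟩
    · exact le_of_lt (lt_of_le_of_lt (by positivity) hx.1)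
    · exact le_of_lt (lt_of_le_of_lt (by positivity) hy.1)
  have hsub2 : A2 H ⊆ (⋃ t ∈ P2 H, cell2 H t) ∪ Z2 := by
    rintro ⟨x, y⟩ hq
    obtain ⟨i, j, hij, ⟨hx0, hxi⟩, ⟨hy0, hyj⟩⟩ := mem_A2.1 hq
    rcases eq_or_lt_of_le hx0 with h | hx
    · exact Or.inr (Or.inl ⟨h.symm, trivial⟩)
    rcases eq_or_lt_of_le hy0 with h | hy
    · exact Or.inr (Or.inr ⟨trivial, h.symm⟩)
    obtain ⟨a, hai, hxa⟩ := ceil_cell hH hx hxi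
    obtain ⟨b, hbj, hyb⟩ := ceil_cell hH hy hyj
    refine Or.inl ?_
    simp only [Set.mem_iUnion, exists_prop]
    exact ⟨(a, b), mem_P2.2 (by omega), hxa, hyb⟩
  refine le_antisymm ?_ ?_
  · calc volume (A2 H) ≤ volume ((⋃ t ∈ P2 H, cell2 H t) ∪ Z2) := measure_mono hsub2
      _ ≤ volume (⋃ t ∈ P2 H, cell2 H t) + volume Z2 := measure_union_le _ _
      _ = (P2 H).card * ENNReal.ofReal (1/(H:ℝ)^2) := by rw [vol_D2 hH, vol_Z2, add_zero]
  · rw [← vol_D2 hH]; exact measure_mono hsub1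

/-! ### 3D volume -/

def A3 (H : ℕ) : Set (ℝ × ℝ × ℝ) :=
  ⋃ (i : ℕ) (j : ℕ) (k : ℕ) (_ : i + j + k = H),
    Set.Icc (0:ℝ) ((i:ℝ)/H) ×ˢ (Set.Icc (0:ℝ) ((j:ℝ)/H) ×ˢ Set.Icc (0:ℝ) ((k:ℝ)/H))

lemma mem_A3 {H : ℕ} {q : ℝ × ℝ × ℝ} : q ∈ A3 H ↔ ∃ i j k : ℕ, i + j + k = H ∧
    (0 ≤ q.1 ∧ q.1 ≤ (i:ℝ)/H) ∧ (0 ≤ q.2.1 ∧ q.2.1 ≤ (j:ℝ)/H) ∧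
    (0 ≤ q.2.2 ∧ q.2.2 ≤ (k:ℝ)/H) := by
  simp only [A3, Set.mem_iUnion, Set.mem_prod, Set.mem_Icc, exists_prop]

def Z3 : Set (ℝ × ℝ × ℝ) :=
  ({0} ×ˢ (Set.univ : Set (ℝ × ℝ))) ∪
  ((Set.univ : Set ℝ) ×ˢ (({0} ×ˢ (Set.univ : Set ℝ)) ∪ ((Set.univ : Set ℝ) ×ˢ {0})))

lemma vol_Z3 : volume Z3 = 0 := by
  refine le_antisymm ((measure_union_le _ _).trans ?_) zero_le
  have h1 : volume (({(0:ℝ)} ×ˢ (Set.univ : Set (ℝ × ℝ)))) = 0 := by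
    rw [Measure.volume_eq_prod, Measure.prod_prod]; simp
  have h2 : volume ((Set.univ : Set ℝ) ×ˢ (({(0:ℝ)} ×ˢ (Set.univ : Set ℝ)) ∪ ((Set.univ : Set ℝ) ×ˢ {(0:ℝ)}))) = 0 := by
    rw [Measure.volume_eq_prod, Measure.prod_prod]
    have : volume ((({(0:ℝ)} ×ˢ (Set.univ : Set ℝ)) ∪ ((Set.univ : Set ℝ) ×ˢ {(0:ℝ)}))) = 0 := by
      refine le_antisymm ((measure_union_le _ _).trans ?_) zero_le
      rw [Measure.volume_eq_prod, Measure.prod_prod, Measure.prod_prod]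
      simp
    rw [this, mul_zero]
  rw [h1, h2, add_zero]

def cell3 (H : ℕ) (t : ℕ × ℕ × ℕ) : Set (ℝ × ℝ × ℝ) :=
  Set.Ioc ((t.1:ℝ)/H) (((t.1:ℝ)+1)/H) ×ˢ
    (Set.Ioc ((t.2.1:ℝ)/H) (((t.2.1:ℝ)+1)/H) ×ˢ Set.Ioc ((t.2.2:ℝ)/H) (((t.2.2:ℝ)+1)/H))

lemma vol_cell3 {H : ℕ} (hH : 1 ≤ H) (t : ℕ × ℕ × ℕ) :
    volume (cell3 H t) = ENNReal.ofReal (1/(H:ℝ)^3) := by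
  have hH0 : (0:ℝ) < H := by exact_mod_cast hH
  have key : ∀ a : ℕ, (((a:ℝ)+1)/H - (a:ℝ)/H) = 1/H := fun a => by field_simp; ring
  rw [cell3, Measure.volume_eq_prod, Measure.prod_prod, Measure.volume_eq_prod,
    Measure.prod_prod, Real.volume_Ioc, Real.volume_Ioc, Real.volume_Ioc, key, key, key,
    ← ENNReal.ofReal_mul (by positivity), ← ENNReal.ofReal_mul (by positivity)]
  congr 1
  ring

lemma vol_D3 {H : ℕ} (hH : 1 ≤ H) :
    volume (⋃ t ∈ P3 H, cell3 H t) = (P3 H).card * ENNReal.ofReal (1/(H:ℝ)^3) := by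
  have hH0 : (0:ℝ) < H := by exact_mod_cast hH
  rw [measure_biUnion_finset]
  · rw [Finset.sum_congr rfl (fun t _ => vol_cell3 hH t), Finset.sum_const, nsmul_eq_mul]
  · intro s _ t _ hst
    by_cases h1 : s.1 = t.1
    · by_cases h2 : s.2.1 = t.2.1
      · have h3 : s.2.2 ≠ t.2.2 := fun h3 => hst (Prod.ext h1 (Prod.ext h2 h3))
        exact Set.Disjoint.set_prod_right (Set.Disjoint.set_prod_right (cell_disj hH0 h3) _ _) _ _
      · exact Set.Disjoint.set_prod_right (Set.Disjoint.set_prod_left (cell_disj hH0 h2) _ _) _ _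
    · exact Set.Disjoint.set_prod_left (cell_disj hH0 h1) _ _
  · exact fun t _ => (measurableSet_Ioc).prod ((measurableSet_Ioc).prod measurableSet_Ioc)

lemma vol_A3 {H : ℕ} (hH : 1 ≤ H) :
    volume (A3 H) = (P3 H).card * ENNReal.ofReal (1/(H:ℝ)^3) := by
  have hH0 : (0:ℝ) < H := by exact_mod_cast hH
  have hsub1 : (⋃ t ∈ P3 H, cell3 H t) ⊆ A3 H := by
    rintro ⟨x, y, z⟩ hq
    simp only [Set.mem_iUnion, exists_prop] at hq
    obtain ⟨⟨a, b, c⟩, ht, hx, hy, hz⟩ := hq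
    have habc : a + b + c + 3 ≤ H := mem_P3.1 ht
    refine mem_A3.2 ⟨a + 1, b + 1, H - a - b - 2, by omega,
      ⟨le_of_lt (lt_of_le_of_lt (by positivity) hx.1), by push_cast; exact hx.2⟩,
      ⟨le_of_lt (lt_of_le_of_lt (by positivity) hy.1), by push_cast; exact hy.2⟩,
      ⟨le_of_lt (lt_of_le_of_lt (by positivity) hz.1), ?_⟩⟩
    refine hz.2.trans ?_
    have hcc : (c:ℝ) + 1 ≤ ((H - a - b - 2 : ℕ) : ℝ) := by
      have : c + 1 ≤ H - a - b - 2 := by omega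
      exact_mod_cast this
    gcongr
  have hsub2 : A3 H ⊆ (⋃ t ∈ P3 H, cell3 H t) ∪ Z3 := by
    rintro ⟨x, y, z⟩ hq
    obtain ⟨i, j, k, hijk, ⟨hx0, hxi⟩, ⟨hy0, hyj⟩, ⟨hz0, hzk⟩⟩ := mem_A3.1 hq
    rcases eq_or_lt_of_le hx0 with h | hx
    · exact Or.inr (Or.inl ⟨h.symm, trivial⟩)
    rcases eq_or_lt_of_le hy0 with h | hy
    · exact Or.inr (Or.inr ⟨trivial, Or.inl ⟨h.symm, trivial⟩⟩)
    rcases eq_or_lt_of_le hz0 with h | hz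
    · exact Or.inr (Or.inr ⟨trivial, Or.inr ⟨trivial, h.symm⟩⟩)
    obtain ⟨a, hai, hxa⟩ := ceil_cell hH hx hxi
    obtain ⟨b, hbj, hyb⟩ := ceil_cell hH hy hyj
    obtain ⟨c, hck, hzc⟩ := ceil_cell hH hz hzk
    refine Or.inl ?_
    simp only [Set.mem_iUnion, exists_prop]
    exact ⟨(a, b, c), mem_P3.2 (show a + b + c + 3 ≤ H by omega), hxa, hyb, hzc⟩
  refine le_antisymm ?_ ?_
  · calc volume (A3 H) ≤ volume ((⋃ t ∈ P3 H, cell3 H t) ∪ Z3) := measure_mono hsub2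
      _ ≤ volume (⋃ t ∈ P3 H, cell3 H t) + volume Z3 := measure_union_le _ _
      _ = (P3 H).card * ENNReal.ofReal (1/(H:ℝ)^3) := by rw [vol_D3 hH, vol_Z3, add_zero]
  · rw [← vol_D3 hH]; exact measure_mono hsub1

/-! ### Set identifications -/

lemma U_eq_A3 (H : ℕ) : U H = A3 H := by
  ext p
  simp only [U, dasDennisGrid, Set.mem_iUnion, Set.mem_setOf_eq, exists_prop, Set.mem_prod,
    Set.mem_Icc]
  constructor
  · rintro ⟨q, ⟨i, j, k, hs, rfl⟩, hp⟩
    exact mem_A3.2 ⟨i, j, k, hs, hp.1, hp.2.1, hp.2.2⟩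
  · intro hp
    obtain ⟨i, j, k, hs, h1, h2, h3⟩ := mem_A3.1 hp
    exact ⟨_, ⟨i, j, k, hs, rfl⟩, h1, h2, h3⟩

lemma image12_eq {H : ℕ} (hH : 1 ≤ H) :
    (fun p : ℝ × ℝ × ℝ => (p.1, p.2.1)) '' U H = A2 H := by
  rw [U_eq_A3]
  ext ⟨x, y⟩
  constructor
  · rintro ⟨p, hp, heq⟩
    obtain ⟨i, j, k, hs, h1, h2, h3⟩ := mem_A3.1 hp
    injection heq with e1 e2
    subst e1; subst e2
    exact mem_A2.2 ⟨i, j, by omega, h1, h2⟩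
  · intro hq
    obtain ⟨i, j, hij, hx, hy⟩ := mem_A2.1 hq
    exact ⟨(x, y, 0), mem_A3.2 ⟨i, j, H - i - j, by omega, hx, hy, le_refl 0, by positivity⟩, rfl⟩

lemma image13_eq {H : ℕ} (hH : 1 ≤ H) :
    (fun p : ℝ × ℝ × ℝ => (p.1, p.2.2)) '' U H = A2 H := by
  rw [U_eq_A3]
  ext ⟨x, y⟩
  constructor
  · rintro ⟨p, hp, heq⟩
    obtain ⟨i, j, k, hs, h1, h2, h3⟩ := mem_A3.1 hp
    injection heq with e1 e2
    subst e1; subst e2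
    exact mem_A2.2 ⟨i, k, by omega, h1, h3⟩
  · intro hq
    obtain ⟨i, k, hik, hx, hy⟩ := mem_A2.1 hq
    exact ⟨(x, 0, y), mem_A3.2 ⟨i, H - i - k, k, by omega, hx, ⟨le_refl 0, by positivity⟩, hy⟩, rfl⟩

lemma image23_eq {H : ℕ} (hH : 1 ≤ H) :
    (fun p : ℝ × ℝ × ℝ => (p.2.1, p.2.2)) '' U H = A2 H := by
  rw [U_eq_A3]
  ext ⟨x, y⟩
  constructor
  · rintro ⟨p, hp, heq⟩
    obtain ⟨i, j, k, hs, h1, h2, h3⟩ := mem_A3.1 hp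
    injection heq with e1 e2
    subst e1; subst e2
    exact mem_A2.2 ⟨j, k, by omega, h2, h3⟩
  · intro hq
    obtain ⟨j, k, hjk, hx, hy⟩ := mem_A2.1 hq
    exact ⟨(0, x, y), mem_A3.2 ⟨H - j - k, j, k, by omega, ⟨le_refl 0, by positivity⟩, hx, hy⟩, rfl⟩

lemma toReal_A2 {H : ℕ} (hH : 1 ≤ H) :
    (volume (A2 H)).toReal = ((H : ℝ) - 1) / (2 * (H : ℝ)) := by
  have hH0 : (0:ℝ) < H := by exact_mod_cast hH
  rw [vol_A2 hH, ENNReal.toReal_mul, ENNReal.toReal_ofReal (by positivity)]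
  simp only [ENNReal.toReal_natCast]
  have hc : (2:ℝ) * (P2 H).card = ((H:ℝ) - 1) * H := by
    have := card_P2 H
    have hcast : ((2 * (P2 H).card : ℕ) : ℝ) = (((H - 1) * H : ℕ) : ℝ) := by exact_mod_cast this
    push_cast [Nat.cast_sub hH] at hcast
    linarith
  have : ((P2 H).card : ℝ) = ((H:ℝ) - 1) * H / 2 := by linarith
  rw [this]
  field_simp

theorem dasDennis_volume_and_projections (H : ℕ) (hH : 1 ≤ H) :
    (volume (U H)).toReal = ((H : ℝ) - 1) * ((H : ℝ) - 2) / (6 * (H : ℝ) ^ 2) ∧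
    (volume ((fun p : ℝ × ℝ × ℝ => (p.1, p.2.1)) '' U H)).toReal
      = ((H : ℝ) - 1) / (2 * (H : ℝ)) ∧
    (volume ((fun p : ℝ × ℝ × ℝ => (p.1, p.2.2)) '' U H)).toReal
      = ((H : ℝ) - 1) / (2 * (H : ℝ)) ∧
    (volume ((fun p : ℝ × ℝ × ℝ => (p.2.1, p.2.2)) '' U H)).toReal
      = ((H : ℝ) - 1) / (2 * (H : ℝ)) := by
  have hH0 : (0:ℝ) < H := by exact_mod_cast hH
  refine ⟨?_, ?_, ?_, ?_⟩
  · rw [U_eq_A3, vol_A3 hH, ENNReal.toReal_mul, ENNReal.toReal_ofReal (by positivity)]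
    simp only [ENNReal.toReal_natCast]
    rcases Nat.lt_or_ge H 2 with h2 | h2
    · interval_cases H
      · norm_num [P3]
    · have hc : (6:ℝ) * (P3 H).card = ((H:ℝ) - 2) * (((H:ℝ) - 1) * H) := by
        have := card_P3 H
        have hcast : ((6 * (P3 H).card : ℕ) : ℝ) = (((H - 2) * ((H - 1) * H) : ℕ) : ℝ) := by
          exact_mod_cast this
        push_cast [Nat.cast_sub hH, Nat.cast_sub h2] at hcast
        linarith
      have : ((P3 H).card : ℝ) = ((H:ℝ) - 2) * (((H:ℝ) - 1) * H) / 6 := by linarith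
      rw [this]
      field_simp
  · rw [image12_eq hH]; exact toReal_A2 hH
  · rw [image13_eq hH]; exact toReal_A2 hH
  · rw [image23_eq hH]; exact toReal_A2 hH
end
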